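/- Suppose φ, ψ : 𝓕 → 𝓔 are additive mappings such that ⟨φ(z), ψ(w)⟩ = 0 and a·⟨φ(z), φ(w)⟩·a* = (1−a)·⟨ψ(z), ψ(w)⟩·(1−a)* for all z, w ∈ 𝓕. If f : 𝓔 → 𝓖 is an odd orthogonally a-Jensen mapping (f(−x) = −f(x) for all x), then f(φ(x) + φ(y)) = f(φ(x)) + f(φ(y)) and f(ψ(x) + ψ(y)) = f(ψ(x)) + f(ψ(y)) for all x, y ∈ 𝓕; that is, f is additive on φ(𝓕) and on ψ(𝓕). -/

import Mathlib

open scoped RightActions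

/-- The `CStarModule` class of the older Mathlib (right `A`-modules, i.e. `SMul Aᵐᵒᵖ E`,
with the inner product `A`-linear on the right), which the current Mathlib has replaced by
left modules. -/
class CStarModule' (A E : Type*) [NonUnitalSemiring A] [StarRing A] [Module ℂ A]
    [AddCommGroup E] [Module ℂ E] [PartialOrder A] [SMul Aᵐᵒᵖ E] [Norm A] [Norm E]
    extends Inner A E where
  inner_add_right {x} {y} {z} : inner x (y + z) = inner x y + inner x z
  inner_self_nonneg {x} : 0 ≤ inner x x
  inner_self {x} : inner x x = 0 ↔ x = 0
  inner_op_smul_right {a : A} {x y : E} : inner x (y <• a) = inner x y * a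
  inner_smul_right_complex {z : ℂ} {x} {y} : inner x (z • y) = z • inner x y
  star_inner x y : star (inner x y) = inner y x
  norm_eq_sqrt_norm_inner_self x : ‖x‖ = √‖inner x x‖

variable {A : Type*} [CStarAlgebra A] [PartialOrder A] [StarOrderedRing A]
variable {E : Type*} [NormedAddCommGroup E] [Module ℂ E] [Module Aᵐᵒᵖ E] [CStarModule' A E]
variable {F : Type*} [NormedAddCommGroup F] [Module ℂ F] [Module Aᵐᵒᵖ F] [CStarModule' A F]
variable {G : Type*} [NormedAddCommGroup G] [Module ℂ G] [Module Aᵐᵒᵖ G] [CStarModule' A G]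

/-- A mapping `f : E → G` between inner product `A`-modules is *orthogonally `a`-Jensen* if
`⟪x, y⟫ = 0` implies `f (a·x + (1-a)·y) = a·f x + (1-a)·f y` (module actions written as right
actions `<•`, since `E`, `G` are right `A`-modules). -/
def OrthAJensen (a : A) (f : E → G) : Prop :=
  ∀ x y : E, inner (𝕜 := A) x y = 0 →
    f (x <• a + y <• (1 - a)) = f x <• a + f y <• (1 - a)

namespace CStarModule'

@[simp]
theorem inner_zero_right (x : E) : inner (𝕜 := A) x 0 = 0 := by
  have h := CStarModule'.inner_add_right (A := A) (x := x) (y := (0 : E)) (z := 0)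
  rw [add_zero] at h
  calc inner (𝕜 := A) x 0 = inner (𝕜 := A) x 0 + inner (𝕜 := A) x 0 - inner (𝕜 := A) x 0 := by abel
    _ = 0 := by rw [← h, sub_self]

@[simp]
theorem inner_zero_left (x : E) : inner (𝕜 := A) 0 x = 0 := by
  rw [← CStarModule'.star_inner, inner_zero_right, star_zero]

theorem inner_neg_right (x y : E) : inner (𝕜 := A) x (-y) = -inner (𝕜 := A) x y := by
  have h := CStarModule'.inner_add_right (A := A) (x := x) (y := y) (z := -y)
  rw [add_neg_cancel, inner_zero_right] at h
  exact (neg_eq_of_add_eq_zero_right h.symm).symm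

theorem inner_sub_right (x y z : E) :
    inner (𝕜 := A) x (y - z) = inner (𝕜 := A) x y - inner (𝕜 := A) x z := by
  rw [sub_eq_add_neg, CStarModule'.inner_add_right, inner_neg_right, ← sub_eq_add_neg]

theorem inner_add_left (x y z : E) :
    inner (𝕜 := A) (x + y) z = inner (𝕜 := A) x z + inner (𝕜 := A) y z := by
  rw [← CStarModule'.star_inner, CStarModule'.inner_add_right, star_add,
    CStarModule'.star_inner, CStarModule'.star_inner]

theorem inner_op_smul_left (a : A) (x y : E) :
    inner (𝕜 := A) (x <• a) y = star a * inner (𝕜 := A) x y := by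
  rw [← CStarModule'.star_inner, CStarModule'.inner_op_smul_right, star_mul,
    CStarModule'.star_inner]

end CStarModule'

/-- First part of Proposition 2.4: an odd orthogonally `a`-Jensen mapping is additive
on `φ(F)` and on `ψ(F)`. -/
theorem odd_additive_on_ranges (a : A) [Invertible a] [Invertible (1 - a)] (φ ψ : F → E)
    (hφ : ∀ z w : F, φ (z + w) = φ z + φ w)
    (hψ : ∀ z w : F, ψ (z + w) = ψ z + ψ w)
    (horth : ∀ z w : F, inner (𝕜 := A) (φ z) (ψ w) = 0)
    (heq : ∀ z w : F,
      a * inner (𝕜 := A) (φ z) (φ w) * star a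
        = (1 - a) * inner (𝕜 := A) (ψ z) (ψ w) * star (1 - a))
    (f : E → G) (hf : OrthAJensen a f) (hodd : ∀ x : E, f (-x) = -f x) :
    ∀ x y : F,
      f (φ x + φ y) = f (φ x) + f (φ y) ∧ f (ψ x + ψ y) = f (ψ x) + f (ψ y) := by
  classical
  -- basic cancellation fact in a ℂ-module
  have cancelG : ∀ u v : G, u + u = v + v → u = v := by
    intro u v h
    have h2 : (2 : ℂ) • u = (2 : ℂ) • v := by rw [two_smul, two_smul]; exact h
    calc u = ((2 : ℂ)⁻¹ * 2) • u := by norm_num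
      _ = (2 : ℂ)⁻¹ • ((2 : ℂ) • u) := by rw [mul_smul]
      _ = (2 : ℂ)⁻¹ • ((2 : ℂ) • v) := by rw [h2]
      _ = ((2 : ℂ)⁻¹ * 2) • v := by rw [mul_smul]
      _ = v := by norm_num
  -- f 0 = 0
  have hf0 : f 0 = 0 := by
    have h := hodd 0
    rw [neg_zero] at h
    have : f 0 + f 0 = 0 + 0 := by rw [add_zero]; nth_rewrite 1 [h]; exact neg_add_cancel _
    exact cancelG _ _ this
  -- f commutes with <• a and <• (1-a)
  have smulA : ∀ x : E, f (x <• a) = f x <• a := by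
    intro x
    have h := hf x 0 (by simp)
    simpa [hf0] using h
  have smulB : ∀ y : E, f (y <• (1 - a)) = f y <• (1 - a) := by
    intro y
    have h := hf 0 y (by simp)
    simpa [hf0] using h
  -- orthogonal additivity
  have key : ∀ u v : E, inner (𝕜 := A) u v = 0 → f (u + v) = f u + f v := by
    intro u v huv
    have h1 : inner (𝕜 := A) (u <• (⅟a)) (v <• (⅟(1 - a))) = 0 := by
      rw [CStarModule'.inner_op_smul_left, CStarModule'.inner_op_smul_right, huv, zero_mul,
        mul_zero]
    have h2 := hf _ _ h1
    have e1 : (u <• (⅟a)) <• a = u := by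
      rw [smul_smul, ← MulOpposite.op_mul, invOf_mul_self, MulOpposite.op_one, one_smul]
    have e2 : (v <• (⅟(1 - a))) <• (1 - a) = v := by
      rw [smul_smul, ← MulOpposite.op_mul, invOf_mul_self, MulOpposite.op_one, one_smul]
    rw [e1, e2] at h2
    rw [h2, ← smulA, ← smulB, e1, e2]
  -- algebraic cancellation in A
  have cancelA : ∀ (b : A) [Invertible b], ∀ t : A, ⅟b * (b * t * star b) * star (⅟b) = t := by
    intro b _ t
    have h1 : star b * star (⅟b) = 1 := by rw [← star_mul, invOf_mul_self, star_one]
    calc ⅟b * (b * t * star b) * star (⅟b)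
        = (⅟b * b) * t * (star b * star (⅟b)) := by noncomm_ring
      _ = t := by rw [invOf_mul_self, h1, one_mul, mul_one]
  -- the main combinatorial lemma
  have main : ∀ P Q : F → E, (∀ z w : F, P (z + w) = P z + P w) →
      (∀ z w : F, Q (z + w) = Q z + Q w) →
      (∀ z w : F, inner (𝕜 := A) (P z) (Q w) = 0) →
      (∀ z w : F, inner (𝕜 := A) (P z) (P w) = inner (𝕜 := A) (Q z) (Q w)) →
      ∀ x y : F, f (P x + P y) = f (P x) + f (P y) := by
    intro P Q hP hQ hPQ hPP x y
    have hQP : ∀ z w : F, inner (𝕜 := A) (Q z) (P w) = 0 := by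
      intro z w
      rw [← CStarModule'.star_inner, hPQ, star_zero]
    have hΦΨ : ∀ s t : F, inner (𝕜 := A) (P s + Q s) (P t - Q t) = 0 := by
      intro s t
      simp only [CStarModule'.inner_add_left, CStarModule'.inner_sub_right, hPQ, hQP,
        hPP s t]
      abel
    -- equation (I)
    have hI : f (P x + P y) + f (Q x - Q y)
        = (f (P x) + f (Q x)) + (f (P y) - f (Q y)) := by
      have e : P x + Q x + (P y - Q y) = (P x + P y) + (Q x - Q y) := by abel
      have h1 := key (P x + Q x) (P y - Q y) (hΦΨ x y)
      rw [e] at h1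
      have h2 : f ((P x + P y) + (Q x - Q y)) = f (P x + P y) + f (Q x - Q y) := by
        refine key _ _ ?_
        simp [CStarModule'.inner_add_left, CStarModule'.inner_sub_right, hPQ]
      have h3 : f (P x + Q x) = f (P x) + f (Q x) := key _ _ (hPQ x x)
      have h4 : f (P y - Q y) = f (P y) - f (Q y) := by
        have := key (P y) (-(Q y)) (by rw [CStarModule'.inner_neg_right, hPQ, neg_zero])
        rw [hodd] at this
        rw [sub_eq_add_neg, this, sub_eq_add_neg]
      rw [← h2, h1, h3, h4]
    -- equation (II)
    have hII : f (P x + P y) - f (Q x - Q y)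
        = (f (P y) + f (Q y)) + (f (P x) - f (Q x)) := by
      have e : P y + Q y + (P x - Q x) = (P x + P y) + (Q y - Q x) := by abel
      have h1 := key (P y + Q y) (P x - Q x) (hΦΨ y x)
      rw [e] at h1
      have h2 : f ((P x + P y) + (Q y - Q x)) = f (P x + P y) + f (Q y - Q x) := by
        refine key _ _ ?_
        simp [CStarModule'.inner_add_left, CStarModule'.inner_sub_right, hPQ]
      have h3 : f (P y + Q y) = f (P y) + f (Q y) := key _ _ (hPQ y y)
      have h4 : f (P x - Q x) = f (P x) - f (Q x) := by
        have := key (P x) (-(Q x)) (by rw [CStarModule'.inner_neg_right, hPQ, neg_zero])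
        rw [hodd] at this
        rw [sub_eq_add_neg, this, sub_eq_add_neg]
      have h5 : - f (Q x - Q y) = f (Q y - Q x) := by
        rw [← hodd, neg_sub]
      rw [sub_eq_add_neg, h5, ← h2, h1, h3, h4]
    refine cancelG _ _ ?_
    have : (f (P x + P y) + f (Q x - Q y)) + (f (P x + P y) - f (Q x - Q y))
        = f (P x + P y) + f (P x + P y) := by abel
    rw [hI, hII] at this
    rw [← this]
    abel
  intro x y
  constructor
  · -- additivity on φ(F): take Q s = ψ s <• d with d = star (⅟a * (1-a))
    set d : A := star (⅟a * (1 - a)) with hd_def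
    have hd1 : star d = ⅟a * (1 - a) := by rw [hd_def, star_star]
    have hd2 : d = star (1 - a) * star (⅟a) := by rw [hd_def, star_mul]
    refine main φ (fun s => ψ s <• d) hφ
      (fun z w => by show ψ (z + w) <• d = ψ z <• d + ψ w <• d; rw [hψ, smul_add]) ?_ ?_ x y
    · intro z w
      show inner (𝕜 := A) (φ z) (ψ w <• d) = 0
      rw [CStarModule'.inner_op_smul_right, horth, zero_mul]
    · intro z w
      show inner (𝕜 := A) (φ z) (φ w) = inner (𝕜 := A) (ψ z <• d) (ψ w <• d)
      rw [CStarModule'.inner_op_smul_left, CStarModule'.inner_op_smul_right, hd1, hd2]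
      have : (⅟a * (1 - a)) * (inner (𝕜 := A) (ψ z) (ψ w) * (star (1 - a) * star (⅟a)))
          = ⅟a * ((1 - a) * inner (𝕜 := A) (ψ z) (ψ w) * star (1 - a)) * star (⅟a) := by
        simp [mul_assoc]
      rw [this, ← heq, cancelA]
  · -- additivity on ψ(F): take Q s = φ s <• e with e = star (⅟(1-a) * a)
    set e : A := star (⅟(1 - a) * a) with he_def
    have he1 : star e = ⅟(1 - a) * a := by rw [he_def, star_star]
    have he2 : e = star a * star (⅟(1 - a)) := by rw [he_def, star_mul]
    have horth' : ∀ z w : F, inner (𝕜 := A) (ψ z) (φ w) = 0 := by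
      intro z w
      rw [← CStarModule'.star_inner, horth, star_zero]
    refine main ψ (fun s => φ s <• e) hψ
      (fun z w => by show φ (z + w) <• e = φ z <• e + φ w <• e; rw [hφ, smul_add]) ?_ ?_ x y
    · intro z w
      show inner (𝕜 := A) (ψ z) (φ w <• e) = 0
      rw [CStarModule'.inner_op_smul_right, horth', zero_mul]
    · intro z w
      show inner (𝕜 := A) (ψ z) (ψ w) = inner (𝕜 := A) (φ z <• e) (φ w <• e)
      rw [CStarModule'.inner_op_smul_left, CStarModule'.inner_op_smul_right, he1, he2]
      have : (⅟(1 - a) * a) * (inner (𝕜 := A) (φ z) (φ w) * (star a * star (⅟(1 - a))))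
          = ⅟(1 - a) * (a * inner (𝕜 := A) (φ z) (φ w) * star a) * star (⅟(1 - a)) := by
        simp [mul_assoc]
      rw [this, heq, cancelA]
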